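/- Let (X, 𝒜) be a measurable space and f, g ∈ M(X). The following are equivalent: (1) every maximal ideal of M(X) containing f also contains g; (2) Z(f) ⊆ Z(g); (3) Ann(f) ⊆ Ann(g). -/

import Mathlib

open Set

/-- The ring of all real-valued measurable functions on a measurable space `X`,
as a subring of the pointwise ring `X → ℝ`. -/
def Mring (X : Type*) [MeasurableSpace X] : Subring (X → ℝ) where
  carrier := {f | Measurable f}
  mul_mem' hf hg := hf.mul hg
  one_mem' := measurable_one
  add_mem' hf hg := hf.add hg
  zero_mem' := measurable_zero
  neg_mem' hf := hf.neg

/-- The zero-set of a measurable function. -/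
def zset {X : Type*} [MeasurableSpace X] (f : Mring X) : Set X :=
  {x | (f : X → ℝ) x = 0}

/-- The cozero-set of a measurable function. -/
def coz {X : Type*} [MeasurableSpace X] (f : Mring X) : Set X :=
  {x | (f : X → ℝ) x ≠ 0}

/-- Evaluation at a point, as a ring hom. -/
def evalHom {X : Type*} [MeasurableSpace X] (x : X) : Mring X →+* ℝ where
  toFun f := (f : X → ℝ) x
  map_one' := rfl
  map_mul' _ _ := rfl
  map_zero' := rfl
  map_add' _ _ := rfl

/-- For `f, g ∈ M(X)` the following are equivalent:
(1) every maximal ideal of `M(X)` containing `f` also contains `g`;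
(2) `Z(f) ⊆ Z(g)`;
(3) `Ann(f) ⊆ Ann(g)`. -/
theorem stmt_5 {X : Type*} [MeasurableSpace X] (f g : Mring X) :
    List.TFAE
      [∀ M : Ideal (Mring X), M.IsMaximal → f ∈ M → g ∈ M,
       zset f ⊆ zset g,
       {h : Mring X | f * h = 0} ⊆ {h : Mring X | g * h = 0}] := by
  tfae_have 1 → 2 := by
    intro h1 x hx
    have hsurj : Function.Surjective (evalHom (X := X) x) := fun r =>
      ⟨⟨fun _ => r, measurable_const⟩, rfl⟩
    have hmax : (RingHom.ker (evalHom (X := X) x)).IsMaximal :=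
      RingHom.ker_isMaximal_of_surjective _ hsurj
    have hg : g ∈ RingHom.ker (evalHom (X := X) x) :=
      h1 _ hmax (by simpa [RingHom.mem_ker, evalHom, zset] using hx)
    simpa [RingHom.mem_ker, evalHom, zset] using hg
  tfae_have 2 → 1 := by
    intro h2 M _ hfM
    set k : Mring X := ⟨fun y => (g : X → ℝ) y * ((f : X → ℝ) y)⁻¹,
      g.2.mul f.2.inv⟩ with hk
    have : f * k = g := by
      apply Subtype.ext
      funext y
      show (f : X → ℝ) y * ((g : X → ℝ) y * ((f : X → ℝ) y)⁻¹) = (g : X → ℝ) y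
      by_cases hy : (f : X → ℝ) y = 0
      · have : (g : X → ℝ) y = 0 := h2 hy
        simp [hy, this]
      · field_simp
    rw [← this]
    exact Ideal.mul_mem_right _ _ hfM
  tfae_have 2 → 3 := by
    intro h2 h hh
    apply Subtype.ext
    funext y
    show (g : X → ℝ) y * (h : X → ℝ) y = 0
    by_cases hy : (f : X → ℝ) y = 0
    · have : (g : X → ℝ) y = 0 := h2 hy
      simp [this]
    · have := congrFun (congrArg Subtype.val hh) y
      have hhy : (f : X → ℝ) y * (h : X → ℝ) y = 0 := this
      rcases mul_eq_zero.mp hhy with h' | h'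
      · exact absurd h' hy
      · simp [h']
  tfae_have 3 → 2 := by
    intro h3 x hx
    have hmeas : MeasurableSet (zset f) := f.2 (measurableSet_singleton 0)
    set h : Mring X := ⟨(zset f).indicator fun _ => (1 : ℝ),
      (measurable_const).indicator hmeas⟩ with hhdef
    have hfh : f * h = 0 := by
      apply Subtype.ext
      funext y
      show (f : X → ℝ) y * (zset f).indicator (fun _ => (1:ℝ)) y = 0
      by_cases hy : (f : X → ℝ) y = 0
      · simp [hy]
      · simp [Set.indicator_of_notMem, zset, hy]
    have := h3 hfh
    have := congrFun (congrArg Subtype.val this) x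
    have hgx : (g : X → ℝ) x * (zset f).indicator (fun _ => (1:ℝ)) x = 0 := this
    have hxin : x ∈ zset f := hx
    rw [Set.indicator_of_mem hxin, mul_one] at hgx
    exact hgx
  tfae_finish
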